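/- Every positive integer n has exactly one representation n = ∑_{0 ≤ i ≤ t} a_i·𝒦_i with all a_i ∈ {0, 1, 2}, leading digit a_t ≠ 0, and no index i with a_{i+1} = a_i = 2. -/

import Mathlib

open Finset

/-- The sequence 𝒦 with 𝒦₀ = 1, 𝒦₁ = 3, 𝒦ₙ = 2𝒦ₙ₋₁ + 2𝒦ₙ₋₂. -/
def Kcal : ℕ → ℕ
  | 0 => 1
  | 1 => 3
  | (n + 2) => 2 * Kcal (n + 1) + 2 * Kcal n

/-- For a digit string `a_t ⋯ a_0` given as the list `l = [a_0, a_1, …, a_t]`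
(least significant digit first), its value `∑ a_i 𝒦_i`. -/
def valK (l : List ℕ) : ℕ := ∑ i ∈ Finset.range l.length, l.getD i 0 * Kcal i

/-- `l = [a_0, a_1, …, a_t]` is a canonical digit string: all digits in {0,1,2},
leading digit `a_t` nonzero, and no index `i` with `a_{i+1} = a_i = 2`. -/
def GoodRep (l : List ℕ) : Prop :=
  (∀ d ∈ l, d ≤ 2) ∧ (l.getLast? ≠ some 0) ∧
    ∀ i : ℕ, ¬ (l.getD i 0 = 2 ∧ l.getD (i + 1) 0 = 2)

/-! ### Auxiliary material -/

theorem Kcal_two_step (n : ℕ) : Kcal (n + 2) = 2 * Kcal (n + 1) + 2 * Kcal n := rfl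

theorem Kcal_pos : ∀ n, 0 < Kcal n
  | 0 => Nat.one_pos
  | 1 => by norm_num [Kcal]
  | (n + 2) => by have := Kcal_pos n; rw [Kcal_two_step]; omega

theorem two_mul_Kcal_le : ∀ n, 2 * Kcal n ≤ Kcal (n + 1)
  | 0 => by norm_num [Kcal]
  | (n + 1) => by have := Kcal_pos n; rw [Kcal_two_step]; omega

theorem Kcal_strictMono : StrictMono Kcal := by
  apply strictMono_nat_of_lt_succ
  intro m
  have h1 := two_mul_Kcal_le m
  have h2 := Kcal_pos m
  omega

theorem lt_Kcal (k : ℕ) : k < Kcal k := by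
  induction k with
  | zero => norm_num [Kcal]
  | succ k ih => have := Kcal_strictMono (lt_add_one k); omega

/-- `getD` of a snoc. -/
theorem getD_snoc (l : List ℕ) (a i : ℕ) :
    (l ++ [a]).getD i 0 =
      if i < l.length then l.getD i 0 else if i = l.length then a else 0 := by
  split_ifs with h1 h2
  · exact List.getD_append _ _ _ _ h1
  · subst h2
    simp [List.getD, List.getElem?_append_right]
  · apply List.getD_eq_default
    simp only [List.length_append, List.length_singleton]
    omega

/-- Digits all ≤ 2 and no two adjacent 2's (no condition on the leading digit). -/
def OkD (l : List ℕ) : Prop :=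
  (∀ d ∈ l, d ≤ 2) ∧ ∀ i : ℕ, ¬ (l.getD i 0 = 2 ∧ l.getD (i + 1) 0 = 2)

theorem okD_nil : OkD [] := by
  constructor
  · simp
  · intro i h
    simp [List.getD] at h

theorem OkD.getD_le_two {l : List ℕ} (h : OkD l) (i : ℕ) : l.getD i 0 ≤ 2 := by
  rcases lt_or_ge i l.length with hi | hi
  · rw [List.getD_eq_getElem l 0 hi]
    exact h.1 _ (List.getElem_mem hi)
  · rw [List.getD_eq_default l 0 hi]
    omega

theorem OkD.of_snoc {l : List ℕ} {a : ℕ} (h : OkD (l ++ [a])) : OkD l := by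
  obtain ⟨hd, hadj⟩ := h
  refine ⟨fun d hdl => hd d (by simp [hdl]), fun i hi => ?_⟩
  obtain ⟨h1, h2⟩ := hi
  have hi1 : i + 1 < l.length := by
    by_contra hc
    rw [List.getD_eq_default _ _ (by omega)] at h2
    omega
  refine hadj i ⟨?_, ?_⟩
  · rw [getD_snoc, if_pos (by omega)]; exact h1
  · rw [getD_snoc, if_pos hi1]; exact h2

theorem OkD.snoc {l : List ℕ} {a : ℕ} (h : OkD l) (ha : a ≤ 2)
    (h2 : a = 2 → l.getD (l.length - 1) 0 ≠ 2) : OkD (l ++ [a]) := by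
  refine ⟨?_, fun i hi => ?_⟩
  · intro d hd
    rcases List.mem_append.mp hd with h' | h'
    · exact h.1 d h'
    · simp at h'; omega
  · obtain ⟨g1, g2⟩ := hi
    rcases lt_trichotomy (i + 1) l.length with hc | hc | hc
    · refine h.2 i ⟨?_, ?_⟩
      · rwa [getD_snoc, if_pos (by omega)] at g1
      · rwa [getD_snoc, if_pos hc] at g2
    · rw [getD_snoc, if_pos (by omega)] at g1
      rw [getD_snoc, if_neg (by omega), if_pos hc] at g2
      have := h2 g2
      have : l.getD (l.length - 1) 0 = 2 := by
        have : i = l.length - 1 := by omega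
        rwa [← this]
      tauto
    · rw [getD_snoc, if_neg (by omega), if_neg (by omega)] at g2
      omega

theorem valK_nil : valK [] = 0 := rfl

theorem valK_snoc (l : List ℕ) (a : ℕ) :
    valK (l ++ [a]) = valK l + a * Kcal l.length := by
  unfold valK
  rw [List.length_append, List.length_singleton, Finset.sum_range_succ]
  congr 1
  · exact Finset.sum_congr rfl fun i hi => by
      rw [List.getD_append _ _ _ _ (Finset.mem_range.mp hi)]
  · congr 1
    rw [getD_snoc, if_neg (by omega), if_pos rfl]

/-- Upper bounds for the value of an admissible digit string. -/
theorem valK_bound : ∀ l : List ℕ, OkD l →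
    valK l < Kcal l.length ∧
      (l.getD (l.length - 1) 0 ≤ 1 → valK l < 2 * Kcal (l.length - 1)) := by
  intro l
  induction l using List.reverseRecOn with
  | nil =>
      intro _
      refine ⟨by norm_num [valK_nil, Kcal], fun _ => by norm_num [valK_nil, Kcal]⟩
  | append_singleton m a ih =>
      intro h
      have hm : OkD m := h.of_snoc
      obtain ⟨ih1, ih2⟩ := ih hm
      have ha : a ≤ 2 := h.1 a (by simp)
      have hKpos := Kcal_pos m.length
      have hlen : (m ++ [a]).length = m.length + 1 := by simp
      have htopeq : (m ++ [a]).getD ((m ++ [a]).length - 1) 0 = a := by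
        rw [hlen, Nat.add_sub_cancel, getD_snoc, if_neg (by omega), if_pos rfl]
      constructor
      · rw [valK_snoc, hlen]
        rcases Nat.lt_or_ge a 2 with ha1 | ha2
        · -- a ≤ 1
          have h2 : a * Kcal m.length ≤ Kcal m.length :=
            le_trans (Nat.mul_le_mul_right _ (by omega : a ≤ 1)) (by omega)
          have h3 := two_mul_Kcal_le m.length
          omega
        · -- a = 2
          have ha2' : a = 2 := by omega
          subst ha2'
          rcases Nat.eq_zero_or_pos m.length with h0 | hpos
          · have : m = [] := List.length_eq_zero_iff.mp h0
            subst this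
            norm_num [valK_nil, Kcal]
          · obtain ⟨s, hs⟩ : ∃ s, m.length = s + 1 := ⟨m.length - 1, by omega⟩
            -- the top digit of m is ≤ 1
            have hnot2 : m.getD (m.length - 1) 0 ≠ 2 := by
              intro hcon
              refine h.2 (m.length - 1) ⟨?_, ?_⟩
              · rw [getD_snoc, if_pos (by omega)]; exact hcon
              · rw [getD_snoc, if_neg (by omega), if_pos (by omega)]
            have hle1 : m.getD (m.length - 1) 0 ≤ 1 := by
              have := hm.getD_le_two (m.length - 1); omega
            have hvm := ih2 hle1
            rw [hs] at hvm ⊢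
            rw [Kcal_two_step]
            simp only [Nat.add_sub_cancel] at hvm
            omega
      · intro htop
        rw [htopeq] at htop
        rw [valK_snoc, hlen, Nat.add_sub_cancel]
        have h2 : a * Kcal m.length ≤ Kcal m.length :=
          le_trans (Nat.mul_le_mul_right _ htop) (by omega)
        omega

theorem le_valK {l : List ℕ} (h : l ≠ [])
    (hlast : l.getD (l.length - 1) 0 ≠ 0) : Kcal (l.length - 1) ≤ valK l := by
  obtain ⟨m, a, rfl⟩ : ∃ m a, l = m ++ [a] := by
    rcases List.eq_nil_or_concat l with h' | ⟨m, a, h'⟩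
    · exact absurd h' h
    · exact ⟨m, a, by simpa using h'⟩
  have hlen : (m ++ [a]).length = m.length + 1 := by simp
  rw [hlen, Nat.add_sub_cancel] at hlast ⊢
  rw [getD_snoc, if_neg (by omega), if_pos rfl] at hlast
  rw [valK_snoc]
  have : Kcal m.length ≤ a * Kcal m.length :=
    Nat.le_mul_of_pos_left _ (by omega)
  omega

theorem getLast?_eq_getD {l : List ℕ} (h : l ≠ []) :
    l.getLast? = some (l.getD (l.length - 1) 0) := by
  obtain ⟨m, a, rfl⟩ : ∃ m a, l = m ++ [a] := by
    rcases List.eq_nil_or_concat l with h' | ⟨m, a, h'⟩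
    · exact absurd h' h
    · exact ⟨m, a, by simpa using h'⟩
  have hlen : (m ++ [a]).length = m.length + 1 := by simp
  rw [hlen, Nat.add_sub_cancel, getD_snoc, if_neg (by omega), if_pos rfl]
  simp

/-- Value determines the digit string, among admissible strings of a fixed length. -/
theorem valK_injAux : ∀ n : ℕ, ∀ l l' : List ℕ, l.length = n → l'.length = n →
    OkD l → OkD l' → valK l = valK l' → l = l' := by
  intro n
  induction n with
  | zero =>
      intro l l' hl hl' _ _ _
      rw [List.length_eq_zero_iff.mp hl, List.length_eq_zero_iff.mp hl']
  | succ t ih =>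
      intro l l' hl hl' ho ho' hv
      obtain ⟨m, a, rfl⟩ : ∃ m a, l = m ++ [a] := by
        rcases List.eq_nil_or_concat l with h' | ⟨m, a, h'⟩
        · subst h'; simp at hl
        · exact ⟨m, a, by simpa using h'⟩
      obtain ⟨m', a', rfl⟩ : ∃ m a, l' = m ++ [a] := by
        rcases List.eq_nil_or_concat l' with h' | ⟨m, a, h'⟩
        · subst h'; simp at hl'
        · exact ⟨m, a, by simpa using h'⟩
      have hm : m.length = t := by simp at hl; omega
      have hm' : m'.length = t := by simp at hl'; omega
      have hom : OkD m := ho.of_snoc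
      have hom' : OkD m' := ho'.of_snoc
      have e1 : valK m < Kcal t := hm ▸ (valK_bound m hom).1
      have e2 : valK m' < Kcal t := hm' ▸ (valK_bound m' hom').1
      have ha : a ≤ 2 := ho.1 a (by simp)
      have ha' : a' ≤ 2 := ho'.1 a' (by simp)
      have hKpos := Kcal_pos t
      rw [valK_snoc, valK_snoc, hm, hm'] at hv
      have haa : a = a' := by
        interval_cases a <;> interval_cases a' <;> omega
      subst haa
      have hvm : valK m = valK m' := by omega
      rw [ih m m' hm hm' hom hom' hvm]

/-- Greedy existence: every `r < 𝒦 t` has an admissible digit string of length `t`,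
whose leading digit `a` satisfies `a·𝒦_{t-1} ≤ r < (a+1)·𝒦_{t-1}`. -/
theorem exists_rep : ∀ t : ℕ, ∀ r : ℕ, r < Kcal t →
    ∃ l : List ℕ, l.length = t ∧ OkD l ∧ valK l = r ∧
      l.getD (t - 1) 0 * Kcal (t - 1) ≤ r ∧ r < (l.getD (t - 1) 0 + 1) * Kcal (t - 1) := by
  intro t
  induction t with
  | zero =>
      intro r hr
      have hr0 : r = 0 := by
        have : Kcal 0 = 1 := rfl
        omega
      subst hr0
      exact ⟨[], rfl, okD_nil, rfl, by norm_num [List.getD, Kcal]⟩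
  | succ t ih =>
      intro r hr
      have hKpos := Kcal_pos t
      by_cases hc1 : r < Kcal t
      · -- leading digit 0
        obtain ⟨l, hlen, hok, hval, _, _⟩ := ih r hc1
        have htop : (l ++ [0]).getD t 0 = 0 := by
          rw [getD_snoc, if_neg (by omega), if_pos (by omega)]
        refine ⟨l ++ [0], by simp [hlen], hok.snoc (by norm_num) (by omega), ?_, ?_, ?_⟩
        · rw [valK_snoc, hlen]; omega
        · rw [Nat.add_sub_cancel, htop]; omega
        · rw [Nat.add_sub_cancel, htop]; omega
      by_cases hc2 : r < 2 * Kcal t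
      · -- leading digit 1
        obtain ⟨l, hlen, hok, hval, _, _⟩ := ih (r - Kcal t) (by omega)
        have htop : (l ++ [1]).getD t 0 = 1 := by
          rw [getD_snoc, if_neg (by omega), if_pos (by omega)]
        refine ⟨l ++ [1], by simp [hlen], hok.snoc (by norm_num) (by omega), ?_, ?_, ?_⟩
        · rw [valK_snoc, hlen]; omega
        · rw [Nat.add_sub_cancel, htop]; omega
        · rw [Nat.add_sub_cancel, htop]; omega
      · -- leading digit 2
        cases t with
        | zero =>
            have hK1 : Kcal (0 + 1) = 3 := rfl
            have hK0 : Kcal 0 = 1 := rfl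
            have hr2 : r = 2 := by omega
            subst hr2
            have hval2 : valK ([] ++ [2]) = 2 := by
              rw [valK_snoc, valK_nil]
              norm_num [Kcal]
            refine ⟨[2], rfl, okD_nil.snoc (by norm_num) ?_, hval2, by norm_num [List.getD, Kcal],
              by norm_num [List.getD, Kcal]⟩
            intro _
            simp [List.getD]
        | succ s =>
            have hK : Kcal (s + 1 + 1) = 2 * Kcal (s + 1) + 2 * Kcal s := rfl
            have hKs := Kcal_pos s
            have h2s := two_mul_Kcal_le s
            have hr' : r - 2 * Kcal (s + 1) < Kcal (s + 1) := by omega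
            obtain ⟨l, hlen, hok, hval, hlo, hhi⟩ := ih (r - 2 * Kcal (s + 1)) hr'
            simp only [Nat.add_sub_cancel] at hlo hhi
            have htopl : l.getD s 0 ≠ 2 := by
              intro hcon
              rw [hcon] at hlo
              omega
            have htop : (l ++ [2]).getD (s + 1) 0 = 2 := by
              rw [getD_snoc, if_neg (by omega), if_pos (by omega)]
            refine ⟨l ++ [2], by simp [hlen],
              hok.snoc (by norm_num) (fun _ => by rw [hlen]; simpa using htopl), ?_, ?_, ?_⟩
            · rw [valK_snoc, hlen]; omega
            · rw [Nat.add_sub_cancel, htop]; omega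
            · rw [Nat.add_sub_cancel, htop]; omega

theorem exists_window (n : ℕ) (h : 1 ≤ n) : ∃ t, Kcal t ≤ n ∧ n < Kcal (t + 1) := by
  have hex : ∃ k, n < Kcal k := ⟨n, lt_Kcal n⟩
  classical
  set t₀ := Nat.find hex with ht₀
  have hspec : n < Kcal t₀ := Nat.find_spec hex
  have h0 : t₀ ≠ 0 := by
    intro hcon
    rw [hcon] at hspec
    have : Kcal 0 = 1 := rfl
    omega
  refine ⟨t₀ - 1, ?_, ?_⟩
  · have := Nat.find_min hex (show t₀ - 1 < t₀ by omega)
    omega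
  · have : t₀ - 1 + 1 = t₀ := by omega
    rw [this]
    exact hspec

theorem canonical_representation_exists_unique :
    ∀ n : ℕ, 1 ≤ n → ∃! l : List ℕ, GoodRep l ∧ valK l = n := by
  intro n hn
  obtain ⟨t, hlow, hhigh⟩ := exists_window n hn
  obtain ⟨l, hlen, hok, hval, hlo, hhi⟩ := exists_rep (t + 1) n hhigh
  simp only [Nat.add_sub_cancel] at hlo hhi
  have hne : l ≠ [] := by intro h; subst h; simp at hlen
  have hKpos := Kcal_pos t
  have htop : l.getD t 0 ≠ 0 := by
    intro h
    rw [h] at hhi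
    omega
  have hgood : GoodRep l := by
    refine ⟨hok.1, ?_, hok.2⟩
    rw [getLast?_eq_getD hne, hlen, Nat.add_sub_cancel]
    intro hcon
    exact htop (Option.some_injective _ hcon)
  refine ⟨l, ⟨hgood, hval⟩, ?_⟩
  rintro l' ⟨hg', hv'⟩
  have hok' : OkD l' := ⟨hg'.1, hg'.2.2⟩
  have hne' : l' ≠ [] := by
    rintro rfl
    rw [valK_nil] at hv'
    omega
  have hA' : valK l' < Kcal l'.length := (valK_bound l' hok').1
  have htop' : l'.getD (l'.length - 1) 0 ≠ 0 := by
    intro hcon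
    apply hg'.2.1
    rw [getLast?_eq_getD hne', hcon]
  have hB' : Kcal (l'.length - 1) ≤ n := hv' ▸ le_valK hne' htop'
  rw [hv'] at hA'
  have hlen' : l'.length = t + 1 := by
    by_contra hll
    have hpos : 1 ≤ l'.length := List.length_pos_iff.mpr hne'
    rcases Nat.lt_or_ge l'.length (t + 1) with hc | hc
    · have : Kcal l'.length ≤ Kcal t := Kcal_strictMono.monotone (by omega)
      omega
    · have : Kcal (t + 1) ≤ Kcal (l'.length - 1) := Kcal_strictMono.monotone (by omega)
      omega
  exact valK_injAux (t + 1) l' l hlen' hlen hok' hok (hv'.trans hval.symm)
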